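/- arXiv:1711.00382 — 2 statements merged into one kernel-verified Lean document; each statement's English description precedes it below -/
import Mathlib

section
/- Let Σ₀, Σ₁ be symmetric positive semidefinite p×p matrices, γ > 0, and for i ∈ {0,1} let δ_i > 0 and T_i = (I_p + (γ/(1+γδ_i)) Σ_i)⁻¹. Suppose additionally (1/n) tr(Σ₁ T₁) ≤ δ₁/2 for some n. Then (2γ²/((1+γδ₀)(1+γδ₁))) · (1/n) tr(Σ₀ T₀ Σ₁ T₁) < 1. -/
open scoped Matrix

variable {p : ℕ}

lemma psd_smul {S : Matrix (Fin p) (Fin p) ℝ} (hS : S.PosSemidef) {c : ℝ} (hc : 0 ≤ c) :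
    (c • S).PosSemidef := by
  refine Matrix.PosSemidef.of_dotProduct_mulVec_nonneg ?_ fun x => ?_
  · unfold Matrix.IsHermitian
    rw [Matrix.conjTranspose_smul, hS.1]
    simp
  · rw [Matrix.smul_mulVec, dotProduct_smul]
    exact mul_nonneg hc (hS.dotProduct_mulVec_nonneg x)

lemma trace_ct_mul_self_nonneg (C : Matrix (Fin p) (Fin p) ℝ) : 0 ≤ (Cᴴ * C).trace := by
  rw [Matrix.trace]
  refine Finset.sum_nonneg fun i _ => ?_
  rw [Matrix.diag_apply, Matrix.mul_apply]
  exact Finset.sum_nonneg fun j _ => by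
    rw [Matrix.conjTranspose_apply]; exact mul_self_nonneg _

lemma trace_mul_psd_nonneg {X Y : Matrix (Fin p) (Fin p) ℝ}
    (hX : X.PosSemidef) (hY : Y.PosSemidef) : 0 ≤ (X * Y).trace := by
  open scoped MatrixOrder Matrix.Norms.L2Operator in
  obtain ⟨A, hA⟩ := CStarAlgebra.nonneg_iff_eq_star_mul_self.mp hX.nonneg
  open scoped MatrixOrder Matrix.Norms.L2Operator in
  obtain ⟨B, hB⟩ := CStarAlgebra.nonneg_iff_eq_star_mul_self.mp hY.nonneg
  rw [Matrix.star_eq_conjTranspose] at hA hB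
  subst hA hB
  have h : (Aᴴ * A * (Bᴴ * B)).trace = ((B * Aᴴ)ᴴ * (B * Aᴴ)).trace := by
    rw [mul_assoc, Matrix.trace_mul_comm]
    congr 1
    simp only [Matrix.conjTranspose_mul, Matrix.conjTranspose_conjTranspose, mul_assoc]
  rw [h]
  exact trace_ct_mul_self_nonneg _

lemma key_psd {S : Matrix (Fin p) (Fin p) ℝ} (hS : S.PosSemidef) {c : ℝ} (hc : 0 < c) :
    (S * (1 + c • S)⁻¹).PosSemidef := by
  set M := 1 + c • S with hMdef
  have hM : M.PosDef := Matrix.PosDef.one.add_posSemidef (psd_smul hS hc.le)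
  have hdet : IsUnit M.det := (Matrix.isUnit_iff_isUnit_det M).mp hM.isUnit
  have hMi : M * M⁻¹ = 1 := Matrix.mul_nonsing_inv M hdet
  have hiM : M⁻¹ * M = 1 := Matrix.nonsing_inv_mul M hdet
  have hcomm : S * M = M * S := by
    simp [hMdef, Matrix.mul_add, Matrix.add_mul, mul_smul_comm, smul_mul_assoc]
  have hcomm_inv : S * M⁻¹ = M⁻¹ * S := by
    calc S * M⁻¹ = M⁻¹ * (M * (S * M⁻¹)) := by rw [← mul_assoc, hiM, one_mul]
    _ = M⁻¹ * (S * (M * M⁻¹)) := by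
        rw [show M * (S * M⁻¹) = S * (M * M⁻¹) by rw [← mul_assoc, ← hcomm, mul_assoc]]
    _ = M⁻¹ * S := by rw [hMi, mul_one]
  have hSS : (S * S).PosSemidef := by
    have h := Matrix.posSemidef_conjTranspose_mul_self S
    rwa [hS.1.eq] at h
  have hP : (S + c • (S * S)).PosSemidef := hS.add (psd_smul hSS hc.le)
  refine Matrix.PosSemidef.of_dotProduct_mulVec_nonneg ?_ fun x => ?_
  · show (S * M⁻¹)ᴴ = S * M⁻¹
    rw [Matrix.conjTranspose_mul, Matrix.conjTranspose_nonsing_inv, hM.isHermitian.eq,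
      hS.1.eq, ← hcomm_inv]
  · have hx : M *ᵥ (M⁻¹ *ᵥ x) = x := by
      rw [Matrix.mulVec_mulVec, hMi, Matrix.one_mulVec]
    have h1 : star (M⁻¹ *ᵥ x) ⬝ᵥ ((Mᴴ * S) *ᵥ (M⁻¹ *ᵥ x))
        = star x ⬝ᵥ ((S * M⁻¹) *ᵥ x) := by
      calc star (M⁻¹ *ᵥ x) ⬝ᵥ ((Mᴴ * S) *ᵥ (M⁻¹ *ᵥ x))
          = star (M⁻¹ *ᵥ x) ⬝ᵥ (Mᴴ *ᵥ (S *ᵥ (M⁻¹ *ᵥ x))) := by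
            simp only [← Matrix.mulVec_mulVec]
      _ = (star (M⁻¹ *ᵥ x) ᵥ* Mᴴ) ⬝ᵥ (S *ᵥ (M⁻¹ *ᵥ x)) := by
            rw [Matrix.dotProduct_mulVec]
      _ = star (M *ᵥ (M⁻¹ *ᵥ x)) ⬝ᵥ (S *ᵥ (M⁻¹ *ᵥ x)) := by
            have hst : star (M *ᵥ (M⁻¹ *ᵥ x)) = star (M⁻¹ *ᵥ x) ᵥ* Mᴴ :=
              Matrix.star_mulVec _ _
            rw [hst]
      _ = star x ⬝ᵥ ((S * M⁻¹) *ᵥ x) := by rw [hx, Matrix.mulVec_mulVec]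
    rw [← h1, hM.isHermitian.eq, ← hcomm]
    rw [show S * M = S + c • (S * S) by
      rw [hMdef, mul_add, mul_one, mul_smul_comm]]
    exact hP.dotProduct_mulVec_nonneg _

lemma key_eq {S : Matrix (Fin p) (Fin p) ℝ} (hS : S.PosSemidef) {c : ℝ} (hc : 0 < c) :
    S * (1 + c • S)⁻¹ = c⁻¹ • (1 - (1 + c • S)⁻¹) := by
  set M := 1 + c • S with hMdef
  have hM : M.PosDef := Matrix.PosDef.one.add_posSemidef (psd_smul hS hc.le)
  have hdet : IsUnit M.det := (Matrix.isUnit_iff_isUnit_det M).mp hM.isUnit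
  have hMi : M * M⁻¹ = 1 := Matrix.mul_nonsing_inv M hdet
  have h1 : c • (S * M⁻¹) = 1 - M⁻¹ := by
    rw [← smul_mul_assoc]
    have hcs : (c • S) = M - 1 := by rw [hMdef]; abel
    rw [hcs, sub_mul, hMi, one_mul]
  calc S * M⁻¹ = c⁻¹ • (c • (S * M⁻¹)) := by
        rw [smul_smul, inv_mul_cancel₀ hc.ne', one_smul]
  _ = c⁻¹ • (1 - M⁻¹) := by rw [h1]

open scoped Matrix.Norms.L2Operator

/-- With `T_i = (I + (γ/(1+γδ_i))Σ_i)⁻¹` and `(1/n) tr(Σ₁T₁) ≤ δ₁/2`,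
`(2γ²/((1+γδ₀)(1+γδ₁))) (1/n) tr(Σ₀T₀Σ₁T₁) < 1`. -/
theorem trace_product_bound_lt_one {p : ℕ} (S0 S1 : Matrix (Fin p) (Fin p) ℝ)
    (hS0 : S0.PosSemidef) (hS1 : S1.PosSemidef)
    (γ δ₀ δ₁ : ℝ) (hγ : 0 < γ) (hδ0 : 0 < δ₀) (hδ1 : 0 < δ₁)
    (n : ℝ) (hn : 0 < n)
    (htr : (1 / n) * (S1 * (1 + (γ / (1 + γ * δ₁)) • S1)⁻¹).trace ≤ δ₁ / 2) :
    (2 * γ ^ 2 / ((1 + γ * δ₀) * (1 + γ * δ₁)))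
      * ((1 / n) * (S0 * (1 + (γ / (1 + γ * δ₀)) • S0)⁻¹
          * S1 * (1 + (γ / (1 + γ * δ₁)) • S1)⁻¹).trace) < 1 := by
  have h0 : 0 < 1 + γ * δ₀ := by positivity
  have h1 : 0 < 1 + γ * δ₁ := by positivity
  set c₀ := γ / (1 + γ * δ₀) with hc0def
  set c₁ := γ / (1 + γ * δ₁) with hc1def
  have hc0 : 0 < c₀ := div_pos hγ h0
  have hc1 : 0 < c₁ := div_pos hγ h1
  set T0 := (1 + c₀ • S0)⁻¹ with hT0def
  set T1 := (1 + c₁ • S1)⁻¹ with hT1def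
  have hB : (S1 * T1).PosSemidef := key_psd hS1 hc1
  have hM0 : (1 + c₀ • S0).PosDef :=
    Matrix.PosDef.one.add_posSemidef (psd_smul hS0 hc0.le)
  have hT0 : T0.PosSemidef := hM0.inv.posSemidef
  have key : (S0 * T0 * S1 * T1).trace ≤ c₀⁻¹ * (S1 * T1).trace := by
    have e : S0 * T0 * S1 * T1 = (c₀⁻¹ • (1 - T0)) * (S1 * T1) := by
      rw [← key_eq hS0 hc0, ← hT0def, mul_assoc]
    rw [e, smul_mul_assoc, Matrix.trace_smul, smul_eq_mul, sub_mul, one_mul,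
      Matrix.trace_sub]
    have hpos : 0 ≤ (T0 * (S1 * T1)).trace := trace_mul_psd_nonneg hT0 hB
    have : (S1 * T1).trace - (T0 * (S1 * T1)).trace ≤ (S1 * T1).trace := by linarith
    exact mul_le_mul_of_nonneg_left this (inv_nonneg.mpr hc0.le)
  have hC : 0 ≤ 2 * γ ^ 2 / ((1 + γ * δ₀) * (1 + γ * δ₁)) := by positivity
  have hCc : 0 ≤ 2 * γ ^ 2 / ((1 + γ * δ₀) * (1 + γ * δ₁)) * c₀⁻¹ :=
    mul_nonneg hC (inv_nonneg.mpr hc0.le)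
  calc 2 * γ ^ 2 / ((1 + γ * δ₀) * (1 + γ * δ₁))
        * ((1 / n) * (S0 * T0 * S1 * T1).trace)
      ≤ 2 * γ ^ 2 / ((1 + γ * δ₀) * (1 + γ * δ₁))
        * ((1 / n) * (c₀⁻¹ * (S1 * T1).trace)) := by
        refine mul_le_mul_of_nonneg_left ?_ hC
        exact mul_le_mul_of_nonneg_left key (by positivity)
    _ = (2 * γ ^ 2 / ((1 + γ * δ₀) * (1 + γ * δ₁)) * c₀⁻¹)
        * ((1 / n) * (S1 * T1).trace) := by ring
    _ ≤ (2 * γ ^ 2 / ((1 + γ * δ₀) * (1 + γ * δ₁)) * c₀⁻¹) * (δ₁ / 2) :=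
        mul_le_mul_of_nonneg_left htr hCc
    _ = γ * δ₁ / (1 + γ * δ₁) := by
        rw [hc0def]
        field_simp
    _ < 1 := by
        rw [div_lt_one h1]
        linarith
end

section
/- Let Σ be symmetric positive semidefinite p×p with ‖Σ‖ ≤ K, γ > 0, and n ≥ 1. Then the map δ ↦ (1/n) tr( Σ (I_p + (γ/(1+γδ)) Σ)⁻¹ ) from [0, ∞) to [0, ∞) has a unique fixed point δ* ≥ 0, i.e. there is a unique δ* ≥ 0 with δ* = (1/n) tr(Σ (I_p + (γ/(1+γδ*)) Σ)⁻¹). -/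
open scoped Matrix.Norms.L2Operator


open Matrix in
lemma trace_inv_eq {p : ℕ} {S : Matrix (Fin p) (Fin p) ℝ} (hS : S.PosSemidef)
    {c : ℝ} (hc : 0 ≤ c) :
    (S * (1 + c • S)⁻¹).trace = ∑ j, hS.1.eigenvalues j * (1 + c * hS.1.eigenvalues j)⁻¹ := by
  classical
  set lam := hS.1.eigenvalues with hlamdef
  have hlam : ∀ j, 0 ≤ lam j := fun j => hS.eigenvalues_nonneg j
  set U : Matrix (Fin p) (Fin p) ℝ := (hS.1.eigenvectorUnitary : Matrix (Fin p) (Fin p) ℝ) with hU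
  have hUU : U * star U = 1 := (Matrix.mem_unitaryGroup_iff).mp (hS.1.eigenvectorUnitary).2
  have hUU' : ∀ X : Matrix (Fin p) (Fin p) ℝ, star U * (U * X) = X := by
    intro X
    rw [← Matrix.mul_assoc, (Matrix.mem_unitaryGroup_iff').mp (hS.1.eigenvectorUnitary).2,
      Matrix.one_mul]
  have hdiag : S = U * Matrix.diagonal lam * star U := by
    have := hS.1.spectral_theorem
    rwa [show (RCLike.ofReal ∘ lam : Fin p → ℝ) = lam by
      ext j; simp [RCLike.ofReal_real_eq_id]] at this
  have hpos : ∀ j, 0 < 1 + c * lam j := fun j => by nlinarith [mul_nonneg hc (hlam j)]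
  set B : Matrix (Fin p) (Fin p) ℝ := Matrix.diagonal (fun j => (1 + c * lam j)⁻¹) with hB
  have hAB : Matrix.diagonal (fun j => 1 + c * lam j) * B = 1 := by
    rw [hB, Matrix.diagonal_mul_diagonal]
    have : (fun j => (1 + c * lam j) * (1 + c * lam j)⁻¹) = fun _ : Fin p => (1:ℝ) := by
      funext j; exact mul_inv_cancel₀ (hpos j).ne'
    rw [this, Matrix.diagonal_one]
  have hSc : 1 + c • S = U * Matrix.diagonal (fun j => 1 + c * lam j) * star U := by
    have h1 : (1 : Matrix (Fin p) (Fin p) ℝ) = U * 1 * star U := by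
      rw [Matrix.mul_one, hUU]
    have h2 : c • S = U * (c • Matrix.diagonal lam) * star U := by
      rw [hdiag, Matrix.mul_smul, Matrix.smul_mul]
    rw [h2]
    conv_lhs => rw [h1]
    rw [← Matrix.add_mul, ← Matrix.mul_add]
    congr 2
    rw [← Matrix.diagonal_smul, ← Matrix.diagonal_one, ← Matrix.diagonal_add]
    simp [Pi.smul_def]
  have hinv : (1 + c • S)⁻¹ = U * B * star U := by
    apply Matrix.inv_eq_right_inv
    rw [hSc]
    calc U * Matrix.diagonal (fun j => 1 + c * lam j) * star U * (U * B * star U)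
        = U * (Matrix.diagonal (fun j => 1 + c * lam j) * (star U * (U * (B * star U)))) := by
          simp only [Matrix.mul_assoc]
      _ = U * (Matrix.diagonal (fun j => 1 + c * lam j) * (B * star U)) := by rw [hUU']
      _ = U * star U := by rw [← Matrix.mul_assoc (Matrix.diagonal _), hAB, Matrix.one_mul]
      _ = 1 := hUU
  rw [hinv]
  conv_lhs => rw [hdiag]
  calc (U * Matrix.diagonal lam * star U * (U * B * star U)).trace
      = (U * (Matrix.diagonal lam * (star U * (U * (B * star U))))).trace := by
        simp only [Matrix.mul_assoc]
    _ = (U * (Matrix.diagonal lam * (B * star U))).trace := by rw [hUU']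
    _ = (Matrix.diagonal lam * (B * star U) * U).trace := by rw [Matrix.trace_mul_comm]
    _ = (Matrix.diagonal lam * B * (star U * U)).trace := by simp only [Matrix.mul_assoc]
    _ = (Matrix.diagonal lam * B).trace := by
        rw [(Matrix.mem_unitaryGroup_iff').mp (hS.1.eigenvectorUnitary).2, Matrix.mul_one]
    _ = ∑ j, lam j * (1 + c * lam j)⁻¹ := by
        rw [hB, Matrix.diagonal_mul_diagonal, Matrix.trace_diagonal]

lemma core {p : ℕ} (lam : Fin p → ℝ) (hlam : ∀ j, 0 ≤ lam j)
    (γ : ℝ) (hγ : 0 < γ) (n : ℕ) (hn : 1 ≤ n) :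
    ∃! δ : ℝ, 0 ≤ δ ∧
      δ = (1 / (n : ℝ)) * ∑ j, lam j * (1 + (γ / (1 + γ * δ)) * lam j)⁻¹ := by
  have hn' : (1:ℝ) ≤ (n:ℝ) := by exact_mod_cast hn
  have hn0 : (0:ℝ) < (n:ℝ) := by linarith
  set G : ℝ → ℝ := fun δ => (1 / (n:ℝ)) * ∑ j, lam j * (1 + γ * δ) / (1 + γ * δ + γ * lam j)
    with hGdef
  -- positivity facts
  have hu : ∀ δ : ℝ, 0 ≤ δ → 0 < 1 + γ * δ := fun δ hδ => by nlinarith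
  have hd : ∀ (δ : ℝ) (j : Fin p), 0 ≤ δ → 0 < 1 + γ * δ + γ * lam j := fun δ j hδ => by
    nlinarith [hlam j]
  -- G agrees with the inverse form on nonnegative δ
  have hG_eq : ∀ δ : ℝ, 0 ≤ δ →
      G δ = (1 / (n:ℝ)) * ∑ j, lam j * (1 + (γ / (1 + γ * δ)) * lam j)⁻¹ := by
    intro δ hδ
    simp only [hGdef]
    congr 1
    apply Finset.sum_congr rfl
    intro j _
    have h1 := hu δ hδ
    have h2 := hd δ j hδ
    field_simp
  -- reduce to fixed points of G
  have hiff : ∀ δ : ℝ, (0 ≤ δ ∧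
      δ = (1 / (n:ℝ)) * ∑ j, lam j * (1 + (γ / (1 + γ * δ)) * lam j)⁻¹) ↔
      (0 ≤ δ ∧ δ = G δ) := by
    intro δ
    constructor
    · rintro ⟨h0, he⟩; exact ⟨h0, by rw [hG_eq δ h0]; exact he⟩
    · rintro ⟨h0, he⟩; exact ⟨h0, by rw [← hG_eq δ h0]; exact he⟩
  rw [show (fun δ : ℝ => 0 ≤ δ ∧
      δ = (1 / (n:ℝ)) * ∑ j, lam j * (1 + (γ / (1 + γ * δ)) * lam j)⁻¹) = fun δ : ℝ =>
      (0 ≤ δ ∧ δ = G δ) from funext fun δ => propext (hiff δ)]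
  -- bounds on G
  set M : ℝ := ∑ j, lam j with hM
  have hM0 : 0 ≤ M := Finset.sum_nonneg fun j _ => hlam j
  have hG_nonneg : ∀ δ : ℝ, 0 ≤ δ → 0 ≤ G δ := by
    intro δ hδ
    apply mul_nonneg (by positivity)
    apply Finset.sum_nonneg
    intro j _
    have := hu δ hδ; have := hd δ j hδ; have := hlam j
    positivity
  have hG_le : ∀ δ : ℝ, 0 ≤ δ → G δ ≤ M := by
    intro δ hδ
    have h1 : (∑ j, lam j * (1 + γ * δ) / (1 + γ * δ + γ * lam j)) ≤ M := by
      rw [hM]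
      apply Finset.sum_le_sum
      intro j _
      rw [div_le_iff₀ (hd δ j hδ)]
      nlinarith [mul_nonneg (hlam j) (mul_nonneg hγ.le (hlam j))]
    have h2 : 0 ≤ ∑ j, lam j * (1 + γ * δ) / (1 + γ * δ + γ * lam j) := by
      apply Finset.sum_nonneg
      intro j _
      have := hu δ hδ; have := hd δ j hδ; have := hlam j
      positivity
    calc G δ ≤ 1 * (∑ j, lam j * (1 + γ * δ) / (1 + γ * δ + γ * lam j)) := by
          apply mul_le_mul_of_nonneg_right _ h2
          rw [div_le_one hn0]; exact hn'
      _ ≤ M := by rw [one_mul]; exact h1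
  -- existence via IVT
  have hcont : ContinuousOn (fun δ => G δ - δ) (Set.Icc 0 M) := by
    apply ContinuousOn.sub _ continuousOn_id
    apply ContinuousOn.mul continuousOn_const
    apply continuousOn_finset_sum
    intro j _
    apply ContinuousOn.div
    · exact ((continuous_const.mul (continuous_const.add
        (continuous_const.mul continuous_id))).continuousOn)
    · exact (((continuous_const.add (continuous_const.mul continuous_id)).add
        continuous_const).continuousOn)
    · intro x hx
      exact (hd x j hx.1).ne'
  have hex : ∃ δ ∈ Set.Icc (0:ℝ) M, G δ - δ = 0 := by
    have hmem : (0:ℝ) ∈ Set.Icc (G M - M) (G 0 - 0) := by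
      constructor
      · have := hG_le M hM0; linarith
      · have := hG_nonneg 0 le_rfl; simp; linarith
    have := intermediate_value_Icc' hM0 hcont hmem
    obtain ⟨δ, hδmem, hδeq⟩ := this
    exact ⟨δ, hδmem, hδeq⟩
  obtain ⟨δ, hδmem, hδeq⟩ := hex
  -- uniqueness
  have huniq : ∀ δ₁ δ₂ : ℝ, 0 ≤ δ₁ → 0 ≤ δ₂ → δ₁ = G δ₁ → δ₂ = G δ₂ → δ₁ = δ₂ := by
    intro δ₁ δ₂ h1 h2 hf1 hf2
    set R : ℝ := (1 / (n:ℝ)) * ∑ j, γ^2 * (lam j)^2 /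
      ((1 + γ * δ₁ + γ * lam j) * (1 + γ * δ₂ + γ * lam j)) with hR
    have hkey : δ₂ - δ₁ = (δ₂ - δ₁) * R := by
      have e2 : δ₂ - δ₁ = (1 / (n:ℝ)) * ∑ j,
          (lam j * (1 + γ * δ₂) / (1 + γ * δ₂ + γ * lam j)
            - lam j * (1 + γ * δ₁) / (1 + γ * δ₁ + γ * lam j)) := by
        conv_lhs => rw [hf1, hf2]
        simp only [hGdef]
        rw [Finset.sum_sub_distrib, mul_sub]
      have perterm : ∀ j : Fin p,
          lam j * (1 + γ * δ₂) / (1 + γ * δ₂ + γ * lam j)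
            - lam j * (1 + γ * δ₁) / (1 + γ * δ₁ + γ * lam j)
          = (δ₂ - δ₁) * (γ^2 * (lam j)^2 /
              ((1 + γ * δ₁ + γ * lam j) * (1 + γ * δ₂ + γ * lam j))) := by
        intro j
        have hd1 := hd δ₁ j h1
        have hd2 := hd δ₂ j h2
        rw [div_sub_div _ _ hd2.ne' hd1.ne', mul_div_assoc',
          div_eq_div_iff (mul_pos hd2 hd1).ne' (mul_pos hd1 hd2).ne']
        ring
      calc δ₂ - δ₁ = (1 / (n:ℝ)) * ∑ j,
            (lam j * (1 + γ * δ₂) / (1 + γ * δ₂ + γ * lam j)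
              - lam j * (1 + γ * δ₁) / (1 + γ * δ₁ + γ * lam j)) := e2
        _ = (1 / (n:ℝ)) * ∑ j, (δ₂ - δ₁) * (γ^2 * (lam j)^2 /
              ((1 + γ * δ₁ + γ * lam j) * (1 + γ * δ₂ + γ * lam j))) := by
            rw [Finset.sum_congr rfl (fun j _ => perterm j)]
        _ = (δ₂ - δ₁) * R := by rw [hR, ← Finset.mul_sum]; ring
    have hRle : R ≤ γ * δ₁ / (1 + γ * δ₁) := by
      have step1 : (∑ j, γ^2 * (lam j)^2 /
          ((1 + γ * δ₁ + γ * lam j) * (1 + γ * δ₂ + γ * lam j)))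
          ≤ ∑ j, γ * lam j / (1 + γ * δ₁ + γ * lam j) := by
        apply Finset.sum_le_sum
        intro j _
        have hd1 := hd δ₁ j h1
        have hd2 := hd δ₂ j h2
        rw [div_le_div_iff₀ (by positivity) hd1]
        nlinarith [mul_nonneg (mul_nonneg (mul_nonneg hγ.le (hlam j)) hd1.le) (hu δ₂ h2).le]
      have step2 : (1 / (n:ℝ)) * ∑ j, γ * lam j / (1 + γ * δ₁ + γ * lam j)
          = γ * δ₁ / (1 + γ * δ₁) := by
        have hu1 := hu δ₁ h1
        have : ∀ j : Fin p, γ * lam j / (1 + γ * δ₁ + γ * lam j)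
            = (γ / (1 + γ * δ₁)) * (lam j * (1 + γ * δ₁) / (1 + γ * δ₁ + γ * lam j)) := by
          intro j
          have hd1 := hd δ₁ j h1
          field_simp
        rw [Finset.sum_congr rfl (fun j _ => this j), ← Finset.mul_sum]
        rw [show (1 / (n:ℝ)) * ((γ / (1 + γ * δ₁)) * ∑ j,
            lam j * (1 + γ * δ₁) / (1 + γ * δ₁ + γ * lam j))
            = (γ / (1 + γ * δ₁)) * ((1 / (n:ℝ)) * ∑ j,
            lam j * (1 + γ * δ₁) / (1 + γ * δ₁ + γ * lam j)) from by ring]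
        rw [(by exact hf1.symm : (1 / (n:ℝ)) * ∑ j, lam j * (1 + γ * δ₁) /
            (1 + γ * δ₁ + γ * lam j) = δ₁)]
        ring
      calc R ≤ (1 / (n:ℝ)) * ∑ j, γ * lam j / (1 + γ * δ₁ + γ * lam j) := by
            rw [hR]
            apply mul_le_mul_of_nonneg_left step1 (by positivity)
        _ = γ * δ₁ / (1 + γ * δ₁) := step2
    have hRlt : R < 1 := by
      have hu1 := hu δ₁ h1
      have : γ * δ₁ / (1 + γ * δ₁) < 1 := by
        rw [div_lt_one hu1]; linarith
      linarith
    by_contra hne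
    have hne' : δ₂ - δ₁ ≠ 0 := fun h => hne (by linarith [sub_eq_zero.mp h])
    have h1R : (1:ℝ) = R := mul_left_cancel₀ hne' (by rw [mul_one]; exact hkey)
    linarith
  refine ⟨δ, ⟨hδmem.1, by linarith [hδeq]⟩, ?_⟩
  rintro y ⟨hy0, hyeq⟩
  exact huniq y δ hy0 hδmem.1 hyeq (by linarith [hδeq])

/-- The fixed-point equation `δ = (1/n) tr(Σ(I + (γ/(1+γδ))Σ)⁻¹)` has a unique
nonnegative solution. -/
theorem fixed_point_unique {p : ℕ} (S : Matrix (Fin p) (Fin p) ℝ)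
    (hS : S.PosSemidef) (K : ℝ) (hK : ‖S‖ ≤ K)
    (γ : ℝ) (hγ : 0 < γ) (n : ℕ) (hn : 1 ≤ n) :
    ∃! δ : ℝ, 0 ≤ δ ∧
      δ = (1 / (n : ℝ)) * (S * (1 + (γ / (1 + γ * δ)) • S)⁻¹).trace := by
  have hcore := core hS.1.eigenvalues (fun j => hS.eigenvalues_nonneg j) γ hγ n hn
  refine (existsUnique_congr ?_).mpr hcore
  intro δ
  constructor
  · rintro ⟨h0, he⟩
    refine ⟨h0, ?_⟩
    rwa [trace_inv_eq hS (by positivity : (0:ℝ) ≤ γ / (1 + γ * δ))] at he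
  · rintro ⟨h0, he⟩
    refine ⟨h0, ?_⟩
    rwa [trace_inv_eq hS (by positivity : (0:ℝ) ≤ γ / (1 + γ * δ))]
end
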